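/- The distance dist(p,q) = ‖log(p^{-1/2} q p^{-1/2})‖_F on positive definite matrices is invariant under congruence: dist(g p gᴴ, g q gᴴ) = dist(p, q) for every invertible matrix g. -/

import Mathlib

open Matrix
open scoped ComplexOrder
noncomputable section

/-- matrix exponential -/
def mexp {n : ℕ} (x : Matrix (Fin n) (Fin n) ℂ) : Matrix (Fin n) (Fin n) ℂ :=
  NormedSpace.exp x

/-- logarithm of a positive definite (Hermitian) matrix, via spectral decomposition -/
def mlog {n : ℕ} (p : Matrix (Fin n) (Fin n) ℂ) : Matrix (Fin n) (Fin n) ℂ :=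
  if h : p.IsHermitian then
    (h.eigenvectorUnitary : Matrix (Fin n) (Fin n) ℂ) *
      Matrix.diagonal (fun i => (Real.log (h.eigenvalues i) : ℂ)) *
      (star (h.eigenvectorUnitary : Matrix (Fin n) (Fin n) ℂ))
  else 0

/-- Frobenius norm -/
def frob {n : ℕ} (a : Matrix (Fin n) (Fin n) ℂ) : ℝ :=
  Real.sqrt (Matrix.trace (aᴴ * a)).re

/-- p^{1/2} for positive definite p -/
def psqrt {n : ℕ} (p : Matrix (Fin n) (Fin n) ℂ) : Matrix (Fin n) (Fin n) ℂ :=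
  mexp ((1/2 : ℝ) • mlog p)

/-- geodesic distance on positive definite matrices -/
def gdist {n : ℕ} (p q : Matrix (Fin n) (Fin n) ℂ) : ℝ :=
  frob (mlog ((psqrt p)⁻¹ * q * (psqrt p)⁻¹))

namespace GdistAux

abbrev Mat (n : ℕ) := Matrix (Fin n) (Fin n) ℂ

variable {n : ℕ}

/-- conjugation by the eigenvector unitary with a real function applied to eigenvalues -/
def cfc' {A : Mat n} (hA : A.IsHermitian) (f : ℝ → ℝ) : Mat n :=
  (hA.eigenvectorUnitary : Mat n) *
    Matrix.diagonal (fun i => (f (hA.eigenvalues i) : ℂ)) *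
    (star (hA.eigenvectorUnitary : Mat n))

lemma VsV {A : Mat n} (hA : A.IsHermitian) :
    (hA.eigenvectorUnitary : Mat n) * star (hA.eigenvectorUnitary : Mat n) = 1 :=
  (Matrix.mem_unitaryGroup_iff).mp (hA.eigenvectorUnitary).2

lemma sVV {A : Mat n} (hA : A.IsHermitian) :
    star (hA.eigenvectorUnitary : Mat n) * (hA.eigenvectorUnitary : Mat n) = 1 :=
  (Matrix.mem_unitaryGroup_iff').mp (hA.eigenvectorUnitary).2

lemma cfc'_mul {A : Mat n} (hA : A.IsHermitian) (f g : ℝ → ℝ) :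
    cfc' hA f * cfc' hA g = cfc' hA (fun t => f t * g t) := by
  unfold cfc'
  rw [show ∀ a b c d e f : Mat n, a*b*c*(d*e*f) = a*(b*((c*d)*e))*f by intros; noncomm_ring,
    sVV hA, one_mul, diagonal_mul_diagonal]
  congr 2
  ext i
  push_cast
  ring

lemma cfc'_one {A : Mat n} (hA : A.IsHermitian) : cfc' hA (fun _ => 1) = 1 := by
  unfold cfc'
  simp [VsV hA]

lemma cfc'_conjTranspose {A : Mat n} (hA : A.IsHermitian) (f : ℝ → ℝ) :
    (cfc' hA f)ᴴ = cfc' hA f := by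
  unfold cfc'
  rw [conjTranspose_mul, conjTranspose_mul, star_eq_conjTranspose,
    conjTranspose_conjTranspose, diagonal_conjTranspose, ← mul_assoc]
  congr 2
  ext i
  simp [Pi.star_def, Complex.conj_ofReal]

lemma cfc'_id {A : Mat n} (hA : A.IsHermitian) : cfc' hA (fun t => t) = A :=
  hA.spectral_theorem.symm

lemma mlog_eq {A : Mat n} (hA : A.IsHermitian) : mlog A = cfc' hA Real.log := by
  rw [mlog, dif_pos hA]; rfl

lemma smul_cfc' {A : Mat n} (hA : A.IsHermitian) (r : ℝ) (f : ℝ → ℝ) :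
    r • cfc' hA f = cfc' hA (fun t => r * f t) := by
  unfold cfc'
  rw [← smul_mul_assoc, ← mul_smul_comm]
  congr 2
  ext i j
  rcases eq_or_ne i j with rfl | h
  · simp [diagonal_apply, Complex.real_smul]
  · simp [diagonal_apply_ne _ h]

lemma eigU_isUnit {A : Mat n} (hA : A.IsHermitian) : IsUnit (hA.eigenvectorUnitary : Mat n) := by
  rw [Matrix.isUnit_iff_isUnit_det]
  exact IsUnit.of_mul_eq_one _ (by rw [← det_mul, VsV hA, det_one])

lemma eigU_inv {A : Mat n} (hA : A.IsHermitian) :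
    (hA.eigenvectorUnitary : Mat n)⁻¹ = star (hA.eigenvectorUnitary : Mat n) :=
  Matrix.inv_eq_right_inv (VsV hA)

lemma mexp_cfc' {A : Mat n} (hA : A.IsHermitian) (f : ℝ → ℝ) :
    mexp (cfc' hA f) = cfc' hA (fun t => Real.exp (f t)) := by
  unfold mexp cfc'
  rw [← eigU_inv hA, Matrix.exp_conj _ _ (eigU_isUnit hA), Matrix.exp_diagonal]
  congr 2
  ext i
  simp [Pi.exp_def, ← Complex.exp_eq_exp_ℂ, ← Complex.ofReal_exp]

lemma det_conj_unitary {u : Mat n} (hu : u * star u = 1) (m : Mat n) :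
    det (u * m * star u) = det m := by
  rw [det_mul, det_mul, show u.det * m.det * (star u).det = m.det * (u * star u).det from by
    rw [det_mul]; ring, hu, det_one, mul_one]

lemma conj_sub_smul {u : Mat n} (hu : u * star u = 1) (m : Mat n) (z : ℂ) :
    u * (z • 1 - m) * star u = z • 1 - u * m * star u := by
  rw [mul_sub, sub_mul, mul_smul_comm, smul_mul_assoc, mul_one, hu]

lemma det_smul_one_sub {A : Mat n} (hA : A.IsHermitian) (z : ℂ) :
    det (z • (1 : Mat n) - A) = ∏ i, (z - (hA.eigenvalues i : ℂ)) := by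
  have h1 : z • (1 : Mat n) - A =
      (hA.eigenvectorUnitary : Mat n) *
        (z • 1 - diagonal (RCLike.ofReal ∘ hA.eigenvalues)) *
        star (hA.eigenvectorUnitary : Mat n) := by
    rw [conj_sub_smul (VsV hA)]
    exact congrArg (z • (1 : Mat n) - ·) hA.spectral_theorem
  rw [h1, det_conj_unitary (VsV hA), smul_one_eq_diagonal, diagonal_sub, det_diagonal]
  simp

/-- equal characteristic functions give equal eigenvalue multisets -/
lemma eig_multiset_eq {x y : Mat n} (hx : x.IsHermitian) (hy : y.IsHermitian)
    (hdet : ∀ z : ℂ, det (z • (1 : Mat n) - x) = det (z • (1 : Mat n) - y)) :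
    Multiset.map hx.eigenvalues Finset.univ.val = Multiset.map hy.eigenvalues Finset.univ.val := by
  apply Multiset.map_injective Complex.ofReal_injective
  have key : ∀ {w : Mat n} (hw : w.IsHermitian) (z : ℂ),
      Polynomial.eval z ((Multiset.map (fun a => Polynomial.X - Polynomial.C a)
          (Multiset.map (fun i => (hw.eigenvalues i : ℂ)) Finset.univ.val)).prod)
        = det (z • (1 : Mat n) - w) := by
    intro w hw z
    rw [det_smul_one_sub hw, Polynomial.eval_multiset_prod, Multiset.map_map,
      Finset.prod_eq_multiset_prod]
    simp [Function.comp_def]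
  have hpoly :
      (Multiset.map (fun a => Polynomial.X - Polynomial.C a)
          (Multiset.map (fun i => (hx.eigenvalues i : ℂ)) Finset.univ.val)).prod =
      (Multiset.map (fun a => Polynomial.X - Polynomial.C a)
          (Multiset.map (fun i => (hy.eigenvalues i : ℂ)) Finset.univ.val)).prod :=
    Polynomial.funext fun z => by rw [key hx z, key hy z, hdet z]
  have h2 := congrArg Polynomial.roots hpoly
  rw [Polynomial.roots_multiset_prod_X_sub_C, Polynomial.roots_multiset_prod_X_sub_C] at h2
  rw [Multiset.map_map, Multiset.map_map]
  exact h2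

lemma frob_mlog {A : Mat n} (hA : A.IsHermitian) :
    frob (mlog A) = Real.sqrt (∑ i, Real.log (hA.eigenvalues i) ^ 2) := by
  rw [mlog_eq hA, frob]
  congr 1
  rw [cfc'_conjTranspose hA, cfc'_mul hA]
  unfold cfc'
  rw [trace_mul_cycle, sVV hA, one_mul, trace_diagonal]
  rw [Complex.re_sum]
  congr 1; ext i
  simp [sq]

lemma cfc'_congr {A : Mat n} (hA : A.IsHermitian) {f g : ℝ → ℝ}
    (h : ∀ i, f (hA.eigenvalues i) = g (hA.eigenvalues i)) : cfc' hA f = cfc' hA g := by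
  have e : (fun i => (f (hA.eigenvalues i) : ℂ)) = fun i => (g (hA.eigenvalues i) : ℂ) :=
    funext fun i => by rw [h i]
  unfold cfc'
  rw [e]

lemma posDef_conj {p g : Mat n} (hp : p.PosDef) (hg : IsUnit g) : (g * p * gᴴ).PosDef := by
  refine Matrix.PosDef.of_dotProduct_mulVec_pos ?_ ?_
  · show (g * p * gᴴ)ᴴ = g * p * gᴴ
    rw [conjTranspose_mul, conjTranspose_mul, conjTranspose_conjTranspose, hp.1.eq, mul_assoc]
  · intro x hx
    have hgH : IsUnit gᴴ := by
      rw [Matrix.isUnit_iff_isUnit_det, det_conjTranspose]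
      exact (isUnit_star).mpr ((Matrix.isUnit_iff_isUnit_det g).mp hg)
    have hgx : gᴴ *ᵥ x ≠ 0 := by
      intro h0
      apply hx
      have hinj : Function.Injective (gᴴ).mulVec := Matrix.mulVec_injective_iff_isUnit.mpr hgH
      exact hinj (by rw [h0, Matrix.mulVec_zero])
    have e : dotProduct (star x) ((g * p * gᴴ) *ᵥ x)
        = dotProduct (star (gᴴ *ᵥ x)) (p *ᵥ (gᴴ *ᵥ x)) := by
      rw [star_mulVec, conjTranspose_conjTranspose, ← Matrix.mulVec_mulVec,
        ← Matrix.mulVec_mulVec, dotProduct_mulVec]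
    rw [e]
    exact hp.dotProduct_mulVec_pos hgx

variable {p : Mat n}

lemma psqrt_eq (hp : p.PosDef) :
    psqrt p = cfc' hp.1 (fun t => Real.exp (1 / 2 * Real.log t)) := by
  rw [psqrt, mlog_eq hp.1, smul_cfc', mexp_cfc']

lemma psqrt_conjTranspose (hp : p.PosDef) : (psqrt p)ᴴ = psqrt p := by
  rw [psqrt_eq hp, cfc'_conjTranspose]

lemma psqrt_mul_self (hp : p.PosDef) : psqrt p * psqrt p = p := by
  rw [psqrt_eq hp, cfc'_mul, cfc'_congr hp.1 (g := fun t => t) (fun i => ?_), cfc'_id]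
  rw [← Real.exp_add, show 1/2 * Real.log (hp.1.eigenvalues i) + 1/2 * Real.log (hp.1.eigenvalues i)
      = Real.log (hp.1.eigenvalues i) from by ring, Real.exp_log (hp.eigenvalues_pos i)]

lemma psqrt_isUnit (hp : p.PosDef) : IsUnit (psqrt p) := by
  have h1 : psqrt p * cfc' hp.1 (fun t => Real.exp (-(1 / 2 * Real.log t))) = 1 := by
    rw [psqrt_eq hp, cfc'_mul, cfc'_congr hp.1 (g := fun _ => 1) (fun i => ?_), cfc'_one]
    rw [← Real.exp_add, add_neg_cancel, Real.exp_zero]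
  rw [Matrix.isUnit_iff_isUnit_det]
  exact IsUnit.of_mul_eq_one _ (by rw [← det_mul, h1, det_one])

lemma psqrt_inv_conjTranspose (hp : p.PosDef) : ((psqrt p)⁻¹)ᴴ = (psqrt p)⁻¹ := by
  rw [Matrix.conjTranspose_nonsing_inv, psqrt_conjTranspose hp]

lemma frob_mlog_unitary_conj {x u : Mat n} (hx : x.PosDef) (hu : u * star u = 1) :
    frob (mlog (u * x * star u)) = frob (mlog x) := by
  have huu : IsUnit u := by
    rw [Matrix.isUnit_iff_isUnit_det]
    exact IsUnit.of_mul_eq_one _ (by rw [← det_mul, hu, det_one])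
  have hx' : (u * x * star u).PosDef := by
    have := posDef_conj hx huu
    rwa [← star_eq_conjTranspose] at this
  have hdet : ∀ z : ℂ, det (z • (1 : Mat n) - (u * x * star u)) = det (z • (1 : Mat n) - x) :=
    fun z => by rw [← conj_sub_smul hu x z, det_conj_unitary hu]
  have hms := eig_multiset_eq hx'.1 hx.1 hdet
  rw [frob_mlog hx'.1, frob_mlog hx.1]
  congr 1
  rw [Finset.sum_eq_multiset_sum, Finset.sum_eq_multiset_sum,
    show (fun i => Real.log (hx'.1.eigenvalues i) ^ 2)
      = (fun t => Real.log t ^ 2) ∘ hx'.1.eigenvalues from rfl,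
    show (fun i => Real.log (hx.1.eigenvalues i) ^ 2)
      = (fun t => Real.log t ^ 2) ∘ hx.1.eigenvalues from rfl,
    ← Multiset.map_map, ← Multiset.map_map, hms]

end GdistAux

open GdistAux in
/-- The geodesic distance on positive definite matrices is invariant under congruence:
`dist(g p gᴴ, g q gᴴ) = dist(p, q)` for invertible `g`. -/
theorem gdist_congruence_invariant {n : ℕ} (p q g : Matrix (Fin n) (Fin n) ℂ)
    (hp : p.PosDef) (hq : q.PosDef) (hg : IsUnit g) :
    gdist (g * p * gᴴ) (g * q * gᴴ) = gdist p q := by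
  have hP : (g * p * gᴴ).PosDef := posDef_conj hp hg
  set s : Mat n := psqrt p with hs
  set s' : Mat n := psqrt (g * p * gᴴ) with hs'
  have hsU : IsUnit s := psqrt_isUnit hp
  have hs'U : IsUnit s' := psqrt_isUnit hP
  have hsd : IsUnit s.det := (Matrix.isUnit_iff_isUnit_det s).mp hsU
  have hs'd : IsUnit s'.det := (Matrix.isUnit_iff_isUnit_det s').mp hs'U
  have hsH : sᴴ = s := psqrt_conjTranspose hp
  have hsiH : (s⁻¹)ᴴ = s⁻¹ := psqrt_inv_conjTranspose hp
  have hs'iH : (s'⁻¹)ᴴ = s'⁻¹ := psqrt_inv_conjTranspose hP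
  have hss : s * s = p := psqrt_mul_self hp
  have hs's' : s' * s' = g * p * gᴴ := psqrt_mul_self hP
  have h1 : s * s⁻¹ = 1 := Matrix.mul_nonsing_inv s hsd
  have h2 : s⁻¹ * s = 1 := Matrix.nonsing_inv_mul s hsd
  have h1' : s' * s'⁻¹ = 1 := Matrix.mul_nonsing_inv s' hs'd
  have h2' : s'⁻¹ * s' = 1 := Matrix.nonsing_inv_mul s' hs'd
  set u : Mat n := s'⁻¹ * g * s with hu
  have huH : uᴴ = s * gᴴ * s'⁻¹ := by
    rw [hu, conjTranspose_mul, conjTranspose_mul, hsH, hs'iH, mul_assoc]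
  have hx : (s⁻¹ * q * s⁻¹).PosDef := by
    have := posDef_conj hq ((Matrix.isUnit_nonsing_inv_iff).mpr hsU)
    rwa [hsiH] at this
  have huu : u * star u = 1 := by
    rw [star_eq_conjTranspose, huH, hu]
    calc s'⁻¹ * g * s * (s * gᴴ * s'⁻¹)
        = s'⁻¹ * (g * (s * s) * gᴴ) * s'⁻¹ := by noncomm_ring
      _ = s'⁻¹ * (s' * s') * s'⁻¹ := by rw [hss, hs's']
      _ = 1 := by rw [← mul_assoc, h2', one_mul, h1']
  have hkey : u * (s⁻¹ * q * s⁻¹) * star u = s'⁻¹ * (g * q * gᴴ) * s'⁻¹ := by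
    rw [star_eq_conjTranspose, huH, hu]
    calc s'⁻¹ * g * s * (s⁻¹ * q * s⁻¹) * (s * gᴴ * s'⁻¹)
        = s'⁻¹ * g * ((s * s⁻¹) * q * (s⁻¹ * s)) * gᴴ * s'⁻¹ := by noncomm_ring
      _ = s'⁻¹ * (g * q * gᴴ) * s'⁻¹ := by rw [h1, h2, one_mul, mul_one]; noncomm_ring
  have hfin := frob_mlog_unitary_conj hx huu
  rw [hkey] at hfin
  unfold gdist
  exact hfin
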